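/- Let a, b, c be positive integers with gcd(a,c) = gcd(b,c) = 1 and let t be an integer. Then σ_t(a,b;c) = −(1/(4c)) · Σ_{k=1}^{c−1} e^{(πik/c)(−2t+a+b)} / ( sin(πka/c) · sin(πkb/c) ). -/

import Mathlib

open Complex Real Finset

/-- The Fourier–Dedekind sum `σ_t(a,b;c) = (1/c) ∑_{λ^c = 1, λ ≠ 1}
λ^t / ((λ^a - 1)(λ^b - 1))`, where the nontrivial `c`-th roots of unity are
parametrized as `λ = e^{2πik/c}`, `1 ≤ k ≤ c-1`. -/
noncomputable def fourierDedekind (t : ℤ) (a b c : ℕ) : ℂ :=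
  (1 / (c : ℂ)) * ∑ k ∈ Finset.Icc 1 (c - 1),
    Complex.exp (2 * Real.pi * Complex.I * k / c) ^ t /
      ((Complex.exp (2 * Real.pi * Complex.I * k / c) ^ (a : ℕ) - 1) *
        (Complex.exp (2 * Real.pi * Complex.I * k / c) ^ (b : ℕ) - 1))

lemma fd_aux1 (w : ℂ) :
    Complex.exp (2 * (w * Complex.I)) - 1
      = Complex.exp (w * Complex.I) * (2 * Complex.I * Complex.sin w) := by
  rw [Complex.sin, two_mul, Complex.exp_add,
    show (-w * Complex.I) = -(w * Complex.I) by ring, Complex.exp_neg]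
  have h := Complex.exp_ne_zero (w * Complex.I)
  field_simp
  linear_combination (Complex.exp (w * Complex.I) ^ 2
    - 1) * Complex.I_sq

lemma fd_term_eq (t : ℤ) (a b c : ℕ) (k : ℕ) :
    Complex.exp (2 * Real.pi * Complex.I * k / c) ^ t /
      ((Complex.exp (2 * Real.pi * Complex.I * k / c) ^ (a:ℕ) - 1) *
        (Complex.exp (2 * Real.pi * Complex.I * k / c) ^ (b:ℕ) - 1)) =
    -(1/4 : ℂ) * (Complex.exp (Real.pi * Complex.I * k / c * (2*t - a - b)) /
      ((Real.sin (Real.pi * k * a / c) : ℂ) * (Real.sin (Real.pi * k * b / c) : ℂ))) := by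
  set wa : ℂ := Real.pi * k * a / c with hwa
  set wb : ℂ := Real.pi * k * b / c with hwb
  have hsa : ((Real.sin (Real.pi*k*a/c) : ℝ) : ℂ) = Complex.sin wa := by
    rw [Complex.ofReal_sin]; congr 1; push_cast; ring
  have hsb : ((Real.sin (Real.pi*k*b/c) : ℝ) : ℂ) = Complex.sin wb := by
    rw [Complex.ofReal_sin]; congr 1; push_cast; ring
  have hA : Complex.exp (2 * Real.pi * Complex.I * k / c) ^ (a:ℕ)
      = Complex.exp (2 * (wa * Complex.I)) := by
    rw [← Complex.exp_nat_mul]; congr 1; rw [hwa]; ring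
  have hB : Complex.exp (2 * Real.pi * Complex.I * k / c) ^ (b:ℕ)
      = Complex.exp (2 * (wb * Complex.I)) := by
    rw [← Complex.exp_nat_mul]; congr 1; rw [hwb]; ring
  have hT : Complex.exp (2 * Real.pi * Complex.I * k / c) ^ t
      = Complex.exp ((t:ℂ) * (2 * Real.pi * Complex.I * k / c)) := by
    rw [Complex.exp_int_mul]
  have hkey : Complex.exp (Real.pi * Complex.I * k / c * (2*t - a - b))
        * (Complex.exp (wa*Complex.I) * Complex.exp (wb*Complex.I))
      = Complex.exp ((t:ℂ) * (2 * Real.pi * Complex.I * k / c)) := by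
    rw [← Complex.exp_add, ← Complex.exp_add]; congr 1; rw [hwa, hwb]; ring
  rw [hsa, hsb, hA, hB, hT, fd_aux1 wa, fd_aux1 wb, ← hkey]
  rcases eq_or_ne (Complex.sin wa * Complex.sin wb) 0 with hS | hS
  · rcases mul_eq_zero.mp hS with h | h <;> simp [h, hS]
  · have h1 : Complex.sin wa ≠ 0 := fun h => hS (by simp [h])
    have h2 : Complex.sin wb ≠ 0 := fun h => hS (by simp [h])
    set E := Complex.exp (Real.pi * Complex.I * k / c * (2*t - a - b)) with hE
    set ea := Complex.exp (wa*Complex.I) with hea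
    set eb := Complex.exp (wb*Complex.I) with heb
    have hd1 : ea * (2*Complex.I*Complex.sin wa) * (eb * (2*Complex.I*Complex.sin wb)) ≠ 0 := by
      simp [hea, heb, Complex.exp_ne_zero, h1, h2, Complex.I_ne_zero]
    have hd2 : (4 : ℂ) * (Complex.sin wa * Complex.sin wb) ≠ 0 := by
      simp [h1, h2]
    rw [show -(1/4 : ℂ) * (E / (Complex.sin wa * Complex.sin wb))
        = (-E) / (4 * (Complex.sin wa * Complex.sin wb)) by ring,
      div_eq_div_iff hd1 hd2]
    linear_combination (4 * E * ea * eb * Complex.sin wa * Complex.sin wb) * Complex.I_sq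

lemma fd_reindex (a b c : ℕ) (hc : 0 < c) (t : ℤ) (k : ℕ) (hk2 : k ≤ c - 1) :
    Complex.exp (Real.pi * Complex.I * k / c * (2*t - a - b)) /
      ((Real.sin (Real.pi * k * a / c) : ℂ) * (Real.sin (Real.pi * k * b / c) : ℂ)) =
    Complex.exp (Real.pi * Complex.I * ((c - k : ℕ):ℂ) / c * (-2 * t + a + b)) /
      ((Real.sin (Real.pi * ((c - k : ℕ):ℝ) * a / c) : ℂ)
        * (Real.sin (Real.pi * ((c - k : ℕ):ℝ) * b / c) : ℂ)) := by
  have hkc : k ≤ c := le_trans hk2 (Nat.sub_le c 1)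
  have hcR : (c:ℝ) ≠ 0 := Nat.cast_ne_zero.mpr hc.ne'
  have hcC : (c:ℂ) ≠ 0 := Nat.cast_ne_zero.mpr hc.ne'
  have hsa : Real.sin (Real.pi * ((c - k : ℕ):ℝ) * a / c)
      = -((-1)^a * Real.sin (Real.pi * k * a / c)) := by
    rw [show Real.pi * ((c - k : ℕ):ℝ) * a / c = (a:ℝ) * Real.pi - Real.pi * k * a / c by
      rw [Nat.cast_sub hkc]; field_simp]
    exact Real.sin_nat_mul_pi_sub _ a
  have hsb : Real.sin (Real.pi * ((c - k : ℕ):ℝ) * b / c)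
      = -((-1)^b * Real.sin (Real.pi * k * b / c)) := by
    rw [show Real.pi * ((c - k : ℕ):ℝ) * b / c = (b:ℝ) * Real.pi - Real.pi * k * b / c by
      rw [Nat.cast_sub hkc]; field_simp]
    exact Real.sin_nat_mul_pi_sub _ b
  have hexp : Complex.exp (Real.pi * Complex.I * ((c - k:ℕ):ℂ) / c * (-2 * t + a + b))
      = (-1:ℂ)^(a+b) * Complex.exp (Real.pi * Complex.I * k / c * (2*t - a - b)) := by
    have hck : ((c - k:ℕ):ℂ) = (c:ℂ) - k := by
      push_cast [hkc]; ring
    have h1 : (Real.pi * Complex.I * ((c - k:ℕ):ℂ) / c * (-2 * (t:ℂ) + a + b))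
        = (((a:ℤ) + b - 2*t : ℤ):ℂ) * (Real.pi * Complex.I)
          + Real.pi * Complex.I * k / c * (2*(t:ℂ) - a - b) := by
      rw [hck]; push_cast; field_simp; ring
    rw [h1, Complex.exp_add, Complex.exp_int_mul, Complex.exp_pi_mul_I]
    congr 1
    rw [show ((a:ℤ) + b - 2*t) = ((a+b : ℕ):ℤ) - 2*t by push_cast; ring,
      zpow_sub₀ (by norm_num : (-1:ℂ) ≠ 0), zpow_natCast, zpow_mul]
    norm_num
  rw [hsa, hsb, hexp]
  push_cast
  set s1 := Complex.sin ((Real.pi:ℂ)*k*a/c) with hs1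
  set s2 := Complex.sin ((Real.pi:ℂ)*k*b/c) with hs2
  rw [show -((-1:ℂ)^a*s1) * -((-1:ℂ)^b*s2) = (-1:ℂ)^(a+b)*(s1*s2) by rw [pow_add]; ring,
    mul_div_mul_left _ _ (pow_ne_zero _ (by norm_num : (-1:ℂ) ≠ 0))]

/-- For positive integers `a, b, c` with `gcd(a,c) = gcd(b,c) = 1` and `t ∈ ℤ`:
`σ_t(a,b;c) = -(1/(4c)) ∑_{k=1}^{c-1} e^{(πik/c)(-2t+a+b)} / (sin(πka/c) sin(πkb/c))`. -/
theorem fourierDedekind_eq_dedekindRademacher (a b c : ℕ)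
    (ha : 0 < a) (hb : 0 < b) (hc : 0 < c)
    (hac : Nat.Coprime a c) (hbc : Nat.Coprime b c) (t : ℤ) :
    fourierDedekind t a b c =
      -(1 / (4 * (c : ℂ))) * ∑ k ∈ Finset.Icc 1 (c - 1),
        Complex.exp (Real.pi * Complex.I * k / c * (-2 * t + a + b)) /
          ((Real.sin (Real.pi * k * a / c) : ℂ) * (Real.sin (Real.pi * k * b / c) : ℂ)) := by
  have h2 : (∑ k ∈ Finset.Icc 1 (c-1),
      Complex.exp (Real.pi * Complex.I * k / c * (2*t - a - b)) /
        ((Real.sin (Real.pi * k * a / c) : ℂ) * (Real.sin (Real.pi * k * b / c) : ℂ)))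
      = ∑ k ∈ Finset.Icc 1 (c-1),
        Complex.exp (Real.pi * Complex.I * k / c * (-2 * t + a + b)) /
          ((Real.sin (Real.pi * k * a / c) : ℂ) * (Real.sin (Real.pi * k * b / c) : ℂ)) := by
    refine Finset.sum_nbij' (fun k => c - k) (fun k => c - k) ?_ ?_ ?_ ?_ ?_ <;>
      intro k hk <;> simp only [Finset.mem_Icc] at hk ⊢
    · omega
    · omega
    · omega
    · omega
    · exact fd_reindex a b c hc t k hk.2
  rw [fourierDedekind, Finset.sum_congr rfl fun k _ => fd_term_eq t a b c k,
    ← Finset.mul_sum, h2]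
  ring
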